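/- Fix functions k, l : ℤ → ℤ with k(n) ≥ 2 and l(n) ≥ 2 for all n ∈ ℤ, and let G̃ be the presented group with generators gₙ (n ∈ ℤ) and relations g_{n-1}^{k(n)} = g_n^{l(n)} for all n ∈ ℤ. For m ≥ 0 let H_m be the presented group with generators x_{-m}, …, x_m and relations x_{j-1}^{k(j)} = x_j^{l(j)} for -m+1 ≤ j ≤ m. Then the group homomorphism H_m → G̃ determined by x_j ↦ g_j (for -m ≤ j ≤ m) is well-defined and injective, and its image is the subgroup G_(m) of G̃ generated by g_{-m}, …, g_m. -/

import Mathlib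

/-- The relators `g_{n-1}^{k n} * g_n^{-(l n)}` of the Dehornoy-type inductive limit. -/
def dehornoyRels (k l : ℤ → ℤ) : Set (FreeGroup ℤ) :=
  {r | ∃ n : ℤ, r = FreeGroup.of (n - 1) ^ k n * FreeGroup.of n ^ (-(l n))}

/-- The presented group `G̃` with generators `gₙ (n : ℤ)` and relations
`g_{n-1}^{k n} = g_n^{l n}`. -/
abbrev Gtil (k l : ℤ → ℤ) : Type := PresentedGroup (dehornoyRels k l)

/-- The image `gₙ` in `G̃` of the `n`-th generator. -/
def gg (k l : ℤ → ℤ) (n : ℤ) : Gtil k l := PresentedGroup.of n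

/-- The element `a_{i,m} = g_{-m}^{-(k(-m+1)-1)} ⋯ g_{i-1}^{-(k i - 1)} * g_i` of `G̃`. -/
def aElt (k l : ℤ → ℤ) (i m : ℤ) : Gtil k l :=
  (((List.range (i + m).toNat).map
      (fun t => gg k l (-m + (t : ℤ)) ^ (-(k (-m + (t : ℤ) + 1) - 1)))).prod) * gg k l i

/-- The generating set `{a_{i,m} : m ≥ 0, -m ≤ i ≤ m}` of the positive cone. -/
def aGenSet (k l : ℤ → ℤ) : Set (Gtil k l) :=
  {x | ∃ m i : ℤ, 0 ≤ m ∧ -m ≤ i ∧ i ≤ m ∧ x = aElt k l i m}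

/-- The subsemigroup `P̃` of `G̃` generated by the `a_{i,m}`, viewed as a set. -/
def Ptil (k l : ℤ → ℤ) : Set (Gtil k l) :=
  (Subsemigroup.closure (aGenSet k l) : Subsemigroup (Gtil k l))

/-- The subgroup `G_(m)` of `G̃` generated by `g_{-m}, …, g_m`. -/
def Gsub (k l : ℤ → ℤ) (m : ℤ) : Subgroup (Gtil k l) :=
  Subgroup.closure {x | ∃ j : ℤ, -m ≤ j ∧ j ≤ m ∧ x = gg k l j}

/-- `P` is a positive cone of the group `G`: it is closed under multiplication and
`G` is the disjoint union of `P`, `P⁻¹` and `{1}`. -/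
def IsPositiveCone {G : Type*} [Group G] (P : Set G) : Prop :=
  (∀ a ∈ P, ∀ b ∈ P, a * b ∈ P) ∧
  (∀ g : G, g ∈ P ∨ g⁻¹ ∈ P ∨ g = 1) ∧
  (∀ g ∈ P, g⁻¹ ∉ P) ∧ (1 : G) ∉ P

/-- `C` is a subgroup of `H` which is convex with respect to the set `Q`
(a positive cone of `H`): whenever `c₁, c₂ ∈ C` and `g ∈ H` satisfy
`c₁⁻¹ * g ∈ Q ∪ {1}` and `g⁻¹ * c₂ ∈ Q ∪ {1}`, then `g ∈ C`. -/
def IsConvexIn {G : Type*} [Group G] (H : Subgroup G) (Q : Set G) (C : Subgroup G) : Prop :=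
  C ≤ H ∧ ∀ c₁ ∈ C, ∀ c₂ ∈ C, ∀ g ∈ H,
    c₁⁻¹ * g ∈ Q ∪ {1} → g⁻¹ * c₂ ∈ Q ∪ {1} → g ∈ C

/-- The relators of the finite-stage group `H_m`: for `-m+1 ≤ j ≤ m`,
`x_{j-1}^{k j} * x_j^{-(l j)}`. -/
def finRels (k l : ℤ → ℤ) (m : ℤ) : Set (FreeGroup {j : ℤ // -m ≤ j ∧ j ≤ m}) :=
  {r | ∃ j : ℤ, ∃ hj : -m + 1 ≤ j ∧ j ≤ m,
    r = FreeGroup.of (⟨j - 1, by omega⟩ : {j : ℤ // -m ≤ j ∧ j ≤ m}) ^ k j *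
        FreeGroup.of (⟨j, by omega⟩ : {j : ℤ // -m ≤ j ∧ j ≤ m}) ^ (-(l j))}

/-- The presented group `H_m` with generators `x_{-m}, …, x_m` and relations
`x_{j-1}^{k j} = x_j^{l j}` for `-m+1 ≤ j ≤ m`. -/
abbrev Hfin (k l : ℤ → ℤ) (m : ℤ) : Type := PresentedGroup (finRels k l m)

namespace Stmt15Aux

/-- The ratio `k j / l j` as a rational. -/
def rat (k l : ℤ → ℤ) (j : ℤ) : ℚ := (k j : ℚ) / (l j : ℚ)

/-- A global solution `cw j` of `k j • cw (j-1) = l j • cw j` with all values positive. -/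
def cw (k l : ℤ → ℤ) (j : ℤ) : ℚ :=
  if 0 ≤ j then ∏ t ∈ Finset.range j.toNat, rat k l ((t : ℤ) + 1)
  else ∏ t ∈ Finset.range (-j).toNat, (rat k l (-(t : ℤ)))⁻¹

variable {k l : ℤ → ℤ}

theorem rat_pos (hk : ∀ n, 2 ≤ k n) (hl : ∀ n, 2 ≤ l n) (j : ℤ) : 0 < rat k l j := by
  have h1 := hk j; have h2 := hl j
  apply div_pos <;> [skip; skip] <;> exact_mod_cast (by omega : (0:ℤ) < _)

theorem cw_pos (hk : ∀ n, 2 ≤ k n) (hl : ∀ n, 2 ≤ l n) (j : ℤ) : 0 < cw k l j := by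
  unfold cw
  split
  · exact Finset.prod_pos fun t _ => rat_pos hk hl _
  · exact Finset.prod_pos fun t _ => inv_pos.2 (rat_pos hk hl _)

theorem cw_rec (hk : ∀ n, 2 ≤ k n) (hl : ∀ n, 2 ≤ l n) (j : ℤ) : cw k l (j - 1) * rat k l j = cw k l j := by
  have hlne : rat k l j ≠ 0 := ne_of_gt (rat_pos hk hl j)
  rcases le_or_gt 1 j with hj | hj
  · have h0 : (0:ℤ) ≤ j - 1 := by omega
    have h1 : (0:ℤ) ≤ j := by omega
    have ht : j.toNat = (j-1).toNat + 1 := by omega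
    unfold cw
    rw [if_pos h0, if_pos h1, ht, Finset.prod_range_succ]
    congr 1
    congr 1
    omega
  · have h0 : ¬ (0:ℤ) ≤ j - 1 := by omega
    have ht : (-(j-1)).toNat = (-j).toNat + 1 := by omega
    unfold cw
    rw [if_neg h0, ht, Finset.prod_range_succ]
    have hc : (-((-j).toNat : ℤ)) = j := by omega
    rw [hc, mul_assoc, inv_mul_cancel₀ hlne, mul_one]
    rcases lt_or_ge j 0 with hj0 | hj0
    · rw [if_neg (by omega)]
    · have hj0' : j = 0 := by omega
      subst hj0'
      norm_num

theorem cw_rel (hk : ∀ n, 2 ≤ k n) (hl : ∀ n, 2 ≤ l n) (j : ℤ) : (k j : ℚ) * cw k l (j - 1) = (l j : ℚ) * cw k l j := by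
  have h := cw_rec hk hl (k := k) (l := l) j
  have hlne : (l j : ℚ) ≠ 0 := by
    have := hl j; exact_mod_cast (by omega : (l j : ℤ) ≠ 0)
  rw [← h, rat]
  field_simp


def auxRels (k l : ℤ → ℤ) (a b : ℤ) : Set (FreeGroup {j : ℤ // a ≤ j ∧ j ≤ b}) :=
  {r | ∃ j : ℤ, ∃ hj : a + 1 ≤ j ∧ j ≤ b,
    r = FreeGroup.of (⟨j - 1, by omega⟩ : {j : ℤ // a ≤ j ∧ j ≤ b}) ^ k j *
        FreeGroup.of (⟨j, by omega⟩ : {j : ℤ // a ≤ j ∧ j ≤ b}) ^ (-(l j))}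

abbrev HAux (k l : ℤ → ℤ) (a b : ℤ) : Type := PresentedGroup (auxRels k l a b)

def xg (k l : ℤ → ℤ) {a b : ℤ} (j : ℤ) (h1 : a ≤ j) (h2 : j ≤ b) : HAux k l a b :=
  PresentedGroup.of ⟨j, h1, h2⟩

theorem mk_rel_one {α : Type*} {rels : Set (FreeGroup α)} {r : FreeGroup α} (h : r ∈ rels) :
    PresentedGroup.mk rels r = 1 :=
  (QuotientGroup.eq_one_iff _).2 (Subgroup.subset_normalClosure h)

theorem xg_rel (k l : ℤ → ℤ) {a b : ℤ} (j : ℤ) (p1 : a ≤ j - 1) (q1 : j - 1 ≤ b)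
    (p2 : a ≤ j) (q2 : j ≤ b) :
    xg (a := a) (b := b) k l (j-1) p1 q1 ^ k j *
      (xg (a := a) (b := b) k l j p2 q2) ^ (-(l j)) = 1 := by
  have hmem : ((FreeGroup.of (⟨j - 1, by omega⟩ : {j : ℤ // a ≤ j ∧ j ≤ b}) ^ k j *
        FreeGroup.of (⟨j, by omega⟩ : {j : ℤ // a ≤ j ∧ j ≤ b}) ^ (-(l j))) : FreeGroup _) ∈
      auxRels k l a b := ⟨j, ⟨by omega, q2⟩, rfl⟩
  have h := mk_rel_one hmem
  rw [map_mul, map_zpow, map_zpow] at h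
  exact h


/-! ### the character to `Multiplicative ℚ` -/

def chiF (k l : ℤ → ℤ) (a b : ℤ) : {j : ℤ // a ≤ j ∧ j ≤ b} → Multiplicative ℚ :=
  fun s => Multiplicative.ofAdd (cw k l s.val)

theorem chi_cond (hk : ∀ n, 2 ≤ k n) (hl : ∀ n, 2 ≤ l n) (a b : ℤ) :
    ∀ r ∈ auxRels k l a b, FreeGroup.lift (chiF k l a b) r = 1 := by
  rintro r ⟨j, ⟨h1, h2⟩, rfl⟩
  rw [map_mul, map_zpow, map_zpow, FreeGroup.lift_apply_of, FreeGroup.lift_apply_of]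
  show Multiplicative.ofAdd (cw k l (j-1)) ^ k j * Multiplicative.ofAdd (cw k l j) ^ (-(l j)) = 1
  rw [← ofAdd_zsmul, ← ofAdd_zsmul, ← ofAdd_add]
  have h := cw_rel hk hl (k := k) (l := l) j
  have hz : k j • cw k l (j-1) + (-(l j)) • cw k l j = 0 := by
    rw [zsmul_eq_mul, zsmul_eq_mul]; push_cast; linarith
  rw [hz, ofAdd_zero]

def chi (hk : ∀ n, 2 ≤ k n) (hl : ∀ n, 2 ≤ l n) (a b : ℤ) :
    HAux k l a b →* Multiplicative ℚ :=
  PresentedGroup.toGroup (chi_cond hk hl a b)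

theorem chi_xg (hk : ∀ n, 2 ≤ k n) (hl : ∀ n, 2 ≤ l n) {a b : ℤ} (j : ℤ) (h1 : a ≤ j)
    (h2 : j ≤ b) : chi hk hl a b (xg k l j h1 h2) = Multiplicative.ofAdd (cw k l j) :=
  PresentedGroup.toGroup.of _


/-! ### right extension as an amalgamated product -/

open Monoid

def GF (k l : ℤ → ℤ) (a b : ℤ) : Bool → Type := fun i => match i with
  | true => HAux k l a b
  | false => Multiplicative ℤ

instance GFgroup (k l : ℤ → ℤ) (a b : ℤ) : ∀ i, Group (GF k l a b i) := fun i => match i with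
  | true => (inferInstance : Group (HAux k l a b))
  | false => (inferInstance : Group (Multiplicative ℤ))

def phiR (k l : ℤ → ℤ) (a b : ℤ) (hab : a ≤ b) :
    ∀ i, Multiplicative ℤ →* GF k l a b i := fun i => match i with
  | true => zpowersHom _ (xg k l b hab le_rfl ^ k (b+1))
  | false => zpowersHom _ (Multiplicative.ofAdd (l (b+1)))

theorem phiR_apply_true (k l : ℤ → ℤ) (a b : ℤ) (hab : a ≤ b) (z : Multiplicative ℤ) :
    phiR k l a b hab true z = (xg k l b hab le_rfl ^ k (b+1)) ^ z.toAdd := rfl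

theorem phiR_apply_false (k l : ℤ → ℤ) (a b : ℤ) (hab : a ≤ b) (z : Multiplicative ℤ) :
    phiR k l a b hab false z = Multiplicative.ofAdd (l (b+1)) ^ z.toAdd := rfl

theorem phiR_inj (hk : ∀ n, 2 ≤ k n) (hl : ∀ n, 2 ≤ l n) (a b : ℤ) (hab : a ≤ b) :
    ∀ i, Function.Injective (phiR k l a b hab i) := by
  intro i
  match i with
  | true =>
    intro z1 z2 h
    rw [phiR_apply_true, phiR_apply_true] at h
    have h2 := congrArg (chi hk hl a b) h
    rw [map_zpow, map_zpow, map_zpow, map_zpow, chi_xg hk hl] at h2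
    have h3 := congrArg Multiplicative.toAdd h2
    rw [toAdd_zpow, toAdd_zpow, toAdd_zpow, toAdd_zpow, toAdd_ofAdd] at h3
    simp only [zsmul_eq_mul] at h3
    have hc := cw_pos hk hl (k := k) (l := l) b
    have hkb := hk (b+1)
    have hne : (k (b+1) : ℚ) * cw k l b ≠ 0 := by
      apply ne_of_gt
      apply mul_pos _ hc
      exact_mod_cast (by omega : (0:ℤ) < k (b+1))
    have h4 : ((Multiplicative.toAdd z1 : ℤ) : ℚ) = ((Multiplicative.toAdd z2 : ℤ) : ℚ) := by
      apply mul_right_cancel₀ hne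
      push_cast at h3 ⊢
      linarith [h3]
    have h5 : Multiplicative.toAdd z1 = Multiplicative.toAdd z2 := by exact_mod_cast h4
    exact h5
  | false =>
    intro z1 z2 h
    rw [phiR_apply_false, phiR_apply_false] at h
    have h3 := congrArg Multiplicative.toAdd h
    rw [toAdd_zpow, toAdd_zpow, toAdd_ofAdd] at h3
    simp only [zsmul_eq_mul] at h3
    have hlb := hl (b+1)
    have : Multiplicative.toAdd z1 = Multiplicative.toAdd z2 :=
      mul_right_cancel₀ (by omega : l (b+1) ≠ 0) h3
    exact this

def thetaRF (k l : ℤ → ℤ) (a b : ℤ) (hab : a ≤ b) :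
    {j : ℤ // a ≤ j ∧ j ≤ b + 1} → PushoutI (phiR k l a b hab) := fun s =>
  if h : s.val ≤ b then PushoutI.of (φ := phiR k l a b hab) true (xg k l s.val s.2.1 h)
  else PushoutI.of (φ := phiR k l a b hab) false (Multiplicative.ofAdd (1 : ℤ))

theorem thetaR_cond (k l : ℤ → ℤ) (a b : ℤ) (hab : a ≤ b) :
    ∀ r ∈ auxRels k l a (b+1), FreeGroup.lift (thetaRF k l a b hab) r = 1 := by
  rintro r ⟨j, ⟨h1, h2⟩, rfl⟩
  rw [map_mul, map_zpow, map_zpow, FreeGroup.lift_apply_of, FreeGroup.lift_apply_of]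
  rcases le_or_gt j b with hj | hj
  · rw [show thetaRF k l a b hab ⟨j-1, by omega⟩ =
        PushoutI.of (φ := phiR k l a b hab) true (xg k l (j-1) (by omega) (by omega))
      from dif_pos (show ((⟨j-1, by omega⟩ : {j : ℤ // a ≤ j ∧ j ≤ b+1}) : ℤ) ≤ b by
        show j - 1 ≤ b; omega),
      show thetaRF k l a b hab ⟨j, by omega⟩ =
        PushoutI.of (φ := phiR k l a b hab) true (xg k l j (by omega) hj)
      from dif_pos (show ((⟨j, by omega⟩ : {j : ℤ // a ≤ j ∧ j ≤ b+1}) : ℤ) ≤ b from hj),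
      ]
    erw [← map_zpow (PushoutI.of (φ := phiR k l a b hab) true), ← map_zpow (PushoutI.of (φ := phiR k l a b hab) true), ← map_mul (PushoutI.of (φ := phiR k l a b hab) true), xg_rel k l j _ _ _ _, map_one]
  · have hj' : j = b + 1 := by omega
    subst hj'
    have hsub : (⟨b+1-1, by omega⟩ : {j : ℤ // a ≤ j ∧ j ≤ b+1}) = ⟨b, by omega⟩ :=
      Subtype.ext (show (b+1-1 : ℤ) = b by omega)
    rw [hsub,
      show thetaRF k l a b hab ⟨b, by omega⟩ =
        PushoutI.of (φ := phiR k l a b hab) true (xg k l b (by omega) le_rfl)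
      from dif_pos (show ((⟨b, by omega⟩ : {j : ℤ // a ≤ j ∧ j ≤ b+1}) : ℤ) ≤ b from le_rfl),
      show thetaRF k l a b hab ⟨b+1, by omega⟩ =
        PushoutI.of (φ := phiR k l a b hab) false (Multiplicative.ofAdd (1 : ℤ))
      from dif_neg (show ¬ ((⟨b+1, by omega⟩ : {j : ℤ // a ≤ j ∧ j ≤ b+1}) : ℤ) ≤ b by
        show ¬ b + 1 ≤ b; omega)]
    have e1' : PushoutI.of (φ := phiR k l a b hab) true (xg k l b (by omega) le_rfl) ^ k (b+1)
        = PushoutI.base (phiR k l a b hab) (Multiplicative.ofAdd (1:ℤ)) := by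
      erw [← map_zpow]
      refine (congrArg (⇑(PushoutI.of (φ := phiR k l a b hab) true)) ?_).trans
        (PushoutI.of_apply_eq_base (phiR k l a b hab) true _)
      show xg (a := a) (b := b) k l b hab le_rfl ^ k (b+1)
          = (xg (a := a) (b := b) k l b hab le_rfl ^ k (b+1))
            ^ (Multiplicative.toAdd (Multiplicative.ofAdd (1:ℤ)))
      rw [toAdd_ofAdd, zpow_one]
    have e2' : PushoutI.of (φ := phiR k l a b hab) false (Multiplicative.ofAdd (1:ℤ))
          ^ (-(l (b+1)))
        = PushoutI.base (phiR k l a b hab) (Multiplicative.ofAdd (-1:ℤ)) := by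
      erw [← map_zpow]
      refine (congrArg (⇑(PushoutI.of (φ := phiR k l a b hab) false)) ?_).trans
        (PushoutI.of_apply_eq_base (phiR k l a b hab) false _)
      show (Multiplicative.ofAdd (1:ℤ)) ^ (-(l (b+1)))
          = (Multiplicative.ofAdd (l (b+1)))
            ^ (Multiplicative.toAdd (Multiplicative.ofAdd (-1:ℤ)))
      rw [toAdd_ofAdd, ← ofAdd_zsmul, ← ofAdd_zsmul]
      congr 1
      simp
    rw [e1', e2', ← map_mul, ← ofAdd_add]
    simp

def thetaR (k l : ℤ → ℤ) (a b : ℤ) (hab : a ≤ b) :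
    HAux k l a (b+1) →* PushoutI (phiR k l a b hab) :=
  PresentedGroup.toGroup (thetaR_cond k l a b hab)

/-! the natural map `er : HAux a b →* HAux a (b+1)` -/

def erF (k l : ℤ → ℤ) (a b : ℤ) : {j : ℤ // a ≤ j ∧ j ≤ b} → HAux k l a (b+1) :=
  fun s => xg k l s.val s.2.1 (by omega)

theorem er_cond (k l : ℤ → ℤ) (a b : ℤ) :
    ∀ r ∈ auxRels k l a b, FreeGroup.lift (erF k l a b) r = 1 := by
  rintro r ⟨j, ⟨h1, h2⟩, rfl⟩
  rw [map_mul, map_zpow, map_zpow, FreeGroup.lift_apply_of, FreeGroup.lift_apply_of]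
  exact xg_rel k l j _ _ _ _

def er (k l : ℤ → ℤ) (a b : ℤ) : HAux k l a b →* HAux k l a (b+1) :=
  PresentedGroup.toGroup (er_cond k l a b)

theorem thetaR_er (k l : ℤ → ℤ) (a b : ℤ) (hab : a ≤ b) (x : HAux k l a b) :
    thetaR k l a b hab (er k l a b x) = PushoutI.of (φ := phiR k l a b hab) true x := by
  have : (thetaR k l a b hab).comp (er k l a b)
      = PushoutI.of (φ := phiR k l a b hab) true := by
    apply PresentedGroup.ext
    intro s
    show thetaR k l a b hab (er k l a b (PresentedGroup.of s)) = _
    rw [er, PresentedGroup.toGroup.of]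
    show thetaR k l a b hab (PresentedGroup.of ⟨s.val, s.2.1, by omega⟩) = _
    rw [thetaR, PresentedGroup.toGroup.of]
    show thetaRF k l a b hab _ = _
    rw [show thetaRF k l a b hab ⟨s.val, s.2.1, by omega⟩ =
        PushoutI.of (φ := phiR k l a b hab) true (xg k l s.val s.2.1 s.2.2)
      from dif_pos s.2.2]
    rfl
  exact DFunLike.congr_fun this x

theorem er_injective (hk : ∀ n, 2 ≤ k n) (hl : ∀ n, 2 ≤ l n) (a b : ℤ) (hab : a ≤ b) :
    Function.Injective (er k l a b) := by
  have hinj := PushoutI.of_injective (phiR_inj hk hl a b hab) true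
  intro x y hxy
  apply hinj
  rw [← thetaR_er k l a b hab, ← thetaR_er k l a b hab, hxy]


/-! ### left extension -/

def phiL (k l : ℤ → ℤ) (a b : ℤ) (hab : a ≤ b) :
    ∀ i, Multiplicative ℤ →* GF k l a b i := fun i => match i with
  | true => zpowersHom _ (xg k l a le_rfl hab ^ l (a-1+1))
  | false => zpowersHom _ (Multiplicative.ofAdd (k (a-1+1)))

theorem phiL_apply_true (k l : ℤ → ℤ) (a b : ℤ) (hab : a ≤ b) (z : Multiplicative ℤ) :
    phiL k l a b hab true z = (xg k l a le_rfl hab ^ l (a-1+1)) ^ z.toAdd := rfl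

theorem phiL_apply_false (k l : ℤ → ℤ) (a b : ℤ) (hab : a ≤ b) (z : Multiplicative ℤ) :
    phiL k l a b hab false z = Multiplicative.ofAdd (k (a-1+1)) ^ z.toAdd := rfl

theorem phiL_inj (hk : ∀ n, 2 ≤ k n) (hl : ∀ n, 2 ≤ l n) (a b : ℤ) (hab : a ≤ b) :
    ∀ i, Function.Injective (phiL k l a b hab i) := by
  intro i
  match i with
  | true =>
    intro z1 z2 h
    rw [phiL_apply_true, phiL_apply_true] at h
    have h2 := congrArg (chi hk hl a b) h
    rw [map_zpow, map_zpow, map_zpow, map_zpow, chi_xg hk hl] at h2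
    have h3 := congrArg Multiplicative.toAdd h2
    rw [toAdd_zpow, toAdd_zpow, toAdd_zpow, toAdd_zpow, toAdd_ofAdd] at h3
    simp only [zsmul_eq_mul] at h3
    have hc := cw_pos hk hl (k := k) (l := l) a
    have hkb := hl (a-1+1)
    have hne : (l (a-1+1) : ℚ) * cw k l a ≠ 0 := by
      apply ne_of_gt
      apply mul_pos _ hc
      exact_mod_cast (by omega : (0:ℤ) < l (a-1+1))
    have h4 : ((Multiplicative.toAdd z1 : ℤ) : ℚ) = ((Multiplicative.toAdd z2 : ℤ) : ℚ) := by
      apply mul_right_cancel₀ hne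
      push_cast at h3 ⊢
      linarith [h3]
    have h5 : Multiplicative.toAdd z1 = Multiplicative.toAdd z2 := by exact_mod_cast h4
    exact h5
  | false =>
    intro z1 z2 h
    rw [phiL_apply_false, phiL_apply_false] at h
    have h3 := congrArg Multiplicative.toAdd h
    rw [toAdd_zpow, toAdd_zpow, toAdd_ofAdd] at h3
    simp only [zsmul_eq_mul] at h3
    have hlb := hk (a-1+1)
    have : Multiplicative.toAdd z1 = Multiplicative.toAdd z2 :=
      mul_right_cancel₀ (by omega : k (a-1+1) ≠ 0) h3
    exact this

def thetaLF (k l : ℤ → ℤ) (a b : ℤ) (hab : a ≤ b) :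
    {j : ℤ // a - 1 ≤ j ∧ j ≤ b} → PushoutI (phiL k l a b hab) := fun s =>
  if h : a ≤ s.val then PushoutI.of (φ := phiL k l a b hab) true (xg k l s.val h s.2.2)
  else PushoutI.of (φ := phiL k l a b hab) false (Multiplicative.ofAdd (1 : ℤ))

theorem thetaL_cond (k l : ℤ → ℤ) (a b : ℤ) (hab : a ≤ b) :
    ∀ r ∈ auxRels k l (a-1) b, FreeGroup.lift (thetaLF k l a b hab) r = 1 := by
  rintro r ⟨j, ⟨h1, h2⟩, rfl⟩
  rw [map_mul, map_zpow, map_zpow, FreeGroup.lift_apply_of, FreeGroup.lift_apply_of]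
  rcases le_or_gt (a+1) j with hj | hj
  · rw [show thetaLF k l a b hab ⟨j-1, by omega⟩ =
        PushoutI.of (φ := phiL k l a b hab) true (xg k l (j-1) (by omega) (by omega))
      from dif_pos (show a ≤ ((⟨j-1, by omega⟩ : {j : ℤ // a - 1 ≤ j ∧ j ≤ b}) : ℤ) by
        show a ≤ j - 1; omega),
      show thetaLF k l a b hab ⟨j, by omega⟩ =
        PushoutI.of (φ := phiL k l a b hab) true (xg k l j (by omega) (by omega))
      from dif_pos (show a ≤ ((⟨j, by omega⟩ : {j : ℤ // a - 1 ≤ j ∧ j ≤ b}) : ℤ) by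
        show a ≤ j; omega),
      ]
    erw [← map_zpow (PushoutI.of (φ := phiL k l a b hab) true), ← map_zpow (PushoutI.of (φ := phiL k l a b hab) true), ← map_mul (PushoutI.of (φ := phiL k l a b hab) true), xg_rel k l j _ _ _ _, map_one]
  · have hj'' : j = a := by omega
    subst hj''
    rw [show thetaLF k l j b hab ⟨j-1, by omega⟩ =
        PushoutI.of (φ := phiL k l j b hab) false (Multiplicative.ofAdd (1 : ℤ))
      from dif_neg (show ¬ j ≤ ((⟨j-1, by omega⟩ : {i : ℤ // j - 1 ≤ i ∧ i ≤ b}) : ℤ) by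
        show ¬ j ≤ j - 1; omega),
      show thetaLF k l j b hab ⟨j, by omega⟩ =
        PushoutI.of (φ := phiL k l j b hab) true (xg k l j le_rfl hab)
      from dif_pos (show j ≤ ((⟨j, by omega⟩ : {i : ℤ // j - 1 ≤ i ∧ i ≤ b}) : ℤ) from le_rfl)]
    have e1' : PushoutI.of (φ := phiL k l j b hab) false (Multiplicative.ofAdd (1:ℤ)) ^ k j
        = PushoutI.base (phiL k l j b hab) (Multiplicative.ofAdd (1:ℤ)) := by
      erw [← map_zpow]
      refine (congrArg (⇑(PushoutI.of (φ := phiL k l j b hab) false)) ?_).trans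
        (PushoutI.of_apply_eq_base (phiL k l j b hab) false _)
      show (Multiplicative.ofAdd (1:ℤ)) ^ k j
          = (Multiplicative.ofAdd (k (j-1+1)))
            ^ (Multiplicative.toAdd (Multiplicative.ofAdd (1:ℤ)))
      rw [toAdd_ofAdd, zpow_one, ← ofAdd_zsmul]
      congr 1
      rw [smul_eq_mul, show (j : ℤ) - 1 + 1 = j from by omega]
      omega
    have e2' : PushoutI.of (φ := phiL k l j b hab) true (xg k l j le_rfl hab) ^ (-(l j))
        = PushoutI.base (phiL k l j b hab) (Multiplicative.ofAdd (-1:ℤ)) := by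
      erw [← map_zpow]
      refine (congrArg (⇑(PushoutI.of (φ := phiL k l j b hab) true)) ?_).trans
        (PushoutI.of_apply_eq_base (phiL k l j b hab) true _)
      show xg (a := j) (b := b) k l j le_rfl hab ^ (-(l j))
          = (xg (a := j) (b := b) k l j le_rfl hab ^ l (j-1+1))
            ^ (Multiplicative.toAdd (Multiplicative.ofAdd (-1:ℤ)))
      rw [toAdd_ofAdd, ← zpow_mul]
      congr 1
      have : (j : ℤ) - 1 + 1 = j := by omega
      rw [this]
      omega
    rw [e1', e2', ← map_mul, ← ofAdd_add]
    simp

def thetaL (k l : ℤ → ℤ) (a b : ℤ) (hab : a ≤ b) :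
    HAux k l (a-1) b →* PushoutI (phiL k l a b hab) :=
  PresentedGroup.toGroup (thetaL_cond k l a b hab)

def elF (k l : ℤ → ℤ) (a b : ℤ) : {j : ℤ // a ≤ j ∧ j ≤ b} → HAux k l (a-1) b :=
  fun s => xg k l s.val (by omega) s.2.2

theorem el_cond (k l : ℤ → ℤ) (a b : ℤ) :
    ∀ r ∈ auxRels k l a b, FreeGroup.lift (elF k l a b) r = 1 := by
  rintro r ⟨j, ⟨h1, h2⟩, rfl⟩
  rw [map_mul, map_zpow, map_zpow, FreeGroup.lift_apply_of, FreeGroup.lift_apply_of]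
  exact xg_rel k l j _ _ _ _

def el (k l : ℤ → ℤ) (a b : ℤ) : HAux k l a b →* HAux k l (a-1) b :=
  PresentedGroup.toGroup (el_cond k l a b)

theorem thetaL_el (k l : ℤ → ℤ) (a b : ℤ) (hab : a ≤ b) (x : HAux k l a b) :
    thetaL k l a b hab (el k l a b x) = PushoutI.of (φ := phiL k l a b hab) true x := by
  have : (thetaL k l a b hab).comp (el k l a b)
      = PushoutI.of (φ := phiL k l a b hab) true := by
    apply PresentedGroup.ext
    intro s
    show thetaL k l a b hab (el k l a b (PresentedGroup.of s)) = _
    rw [el, PresentedGroup.toGroup.of]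
    show thetaL k l a b hab (PresentedGroup.of ⟨s.val, by omega, s.2.2⟩) = _
    rw [thetaL, PresentedGroup.toGroup.of]
    show thetaLF k l a b hab _ = _
    rw [show thetaLF k l a b hab ⟨s.val, by omega, s.2.2⟩ =
        PushoutI.of (φ := phiL k l a b hab) true (xg k l s.val s.2.1 s.2.2)
      from dif_pos s.2.1]
    rfl
  exact DFunLike.congr_fun this x

theorem el_injective (hk : ∀ n, 2 ≤ k n) (hl : ∀ n, 2 ≤ l n) (a b : ℤ) (hab : a ≤ b) :
    Function.Injective (el k l a b) := by
  have hinj := PushoutI.of_injective (phiL_inj hk hl a b hab) true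
  intro x y hxy
  apply hinj
  rw [← thetaL_el k l a b hab, ← thetaL_el k l a b hab, hxy]


/-! ### inclusion maps and chain injectivity -/

def inclF (k l : ℤ → ℤ) (a b a' b' : ℤ) (ha : a' ≤ a) (hb : b ≤ b') :
    {j : ℤ // a ≤ j ∧ j ≤ b} → HAux k l a' b' :=
  fun s => xg k l s.val (le_trans ha s.2.1) (le_trans s.2.2 hb)

theorem incl_cond (k l : ℤ → ℤ) (a b a' b' : ℤ) (ha : a' ≤ a) (hb : b ≤ b') :
    ∀ r ∈ auxRels k l a b, FreeGroup.lift (inclF k l a b a' b' ha hb) r = 1 := by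
  rintro r ⟨j, ⟨h1, h2⟩, rfl⟩
  rw [map_mul, map_zpow, map_zpow, FreeGroup.lift_apply_of, FreeGroup.lift_apply_of]
  exact xg_rel k l j _ _ _ _

def incl (k l : ℤ → ℤ) (a b a' b' : ℤ) (ha : a' ≤ a) (hb : b ≤ b') :
    HAux k l a b →* HAux k l a' b' :=
  PresentedGroup.toGroup (incl_cond k l a b a' b' ha hb)

theorem incl_of (k l : ℤ → ℤ) (a b a' b' : ℤ) (ha : a' ≤ a) (hb : b ≤ b')
    (s : {j : ℤ // a ≤ j ∧ j ≤ b}) :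
    incl k l a b a' b' ha hb (PresentedGroup.of s)
      = xg k l s.val (le_trans ha s.2.1) (le_trans s.2.2 hb) :=
  PresentedGroup.toGroup.of _

theorem inclR_injective (hk : ∀ n, 2 ≤ k n) (hl : ∀ n, 2 ≤ l n) (a b : ℤ) (hab : a ≤ b) :
    ∀ b', b ≤ b' → ∀ hb : b ≤ b', Function.Injective (incl k l a b a b' le_rfl hb) := by
  refine Int.le_induction ?_ ?_
  · intro _
    have hid : incl k l a b a b le_rfl le_rfl = MonoidHom.id _ := by
      apply PresentedGroup.ext
      intro s
      show PresentedGroup.toGroup (incl_cond k l a b a b le_rfl le_rfl) (PresentedGroup.of s) = _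
      rw [PresentedGroup.toGroup.of]
      rfl
    intro x y hxy
    rw [hid] at hxy
    simpa using hxy
  · intro b' hb' IH hb1
    have hcomp : incl k l a b a (b'+1) le_rfl hb1
        = (er k l a b').comp (incl k l a b a b' le_rfl hb') := by
      apply PresentedGroup.ext
      intro s
      show PresentedGroup.toGroup (incl_cond k l a b a (b'+1) le_rfl hb1)
          (PresentedGroup.of s) = (er k l a b') (incl k l a b a b' le_rfl hb'
          (PresentedGroup.of s))
      rw [PresentedGroup.toGroup.of, incl_of]
      show _ = (er k l a b') (PresentedGroup.of ⟨s.val, le_trans le_rfl s.2.1,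
        le_trans s.2.2 hb'⟩)
      rw [er, PresentedGroup.toGroup.of]
      rfl
    rw [hcomp]
    have := Function.Injective.comp (er_injective hk hl a b' (le_trans hab hb')) (IH hb')
    rwa [← MonoidHom.coe_comp] at this

theorem inclL_injective (hk : ∀ n, 2 ≤ k n) (hl : ∀ n, 2 ≤ l n) (a b : ℤ) (hab : a ≤ b) :
    ∀ a', a' ≤ a → ∀ ha : a' ≤ a, Function.Injective (incl k l a b a' b ha le_rfl) := by
  refine Int.le_induction_down ?_ ?_
  · intro _
    have hid : incl k l a b a b le_rfl le_rfl = MonoidHom.id _ := by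
      apply PresentedGroup.ext
      intro s
      show PresentedGroup.toGroup (incl_cond k l a b a b le_rfl le_rfl) (PresentedGroup.of s) = _
      rw [PresentedGroup.toGroup.of]
      rfl
    intro x y hxy
    rw [hid] at hxy
    simpa using hxy
  · intro a' ha' IH ha1
    have hcomp : incl k l a b (a'-1) b ha1 le_rfl
        = (el k l a' b).comp (incl k l a b a' b ha' le_rfl) := by
      apply PresentedGroup.ext
      intro s
      show PresentedGroup.toGroup (incl_cond k l a b (a'-1) b ha1 le_rfl)
          (PresentedGroup.of s) = (el k l a' b) (incl k l a b a' b ha' le_rfl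
          (PresentedGroup.of s))
      rw [PresentedGroup.toGroup.of, incl_of]
      show _ = (el k l a' b) (PresentedGroup.of ⟨s.val, le_trans ha' s.2.1,
        le_trans s.2.2 le_rfl⟩)
      rw [el, PresentedGroup.toGroup.of]
      rfl
    rw [hcomp]
    have := Function.Injective.comp (el_injective hk hl a' b (le_trans ha' hab)) (IH ha')
    rwa [← MonoidHom.coe_comp] at this

theorem incl_injective (hk : ∀ n, 2 ≤ k n) (hl : ∀ n, 2 ≤ l n) (a b a' b' : ℤ) (hab : a ≤ b)
    (ha : a' ≤ a) (hb : b ≤ b') : Function.Injective (incl k l a b a' b' ha hb) := by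
  have hcomp : incl k l a b a' b' ha hb
      = (incl k l a b' a' b' ha le_rfl).comp (incl k l a b a b' le_rfl hb) := by
    apply PresentedGroup.ext
    intro s
    show PresentedGroup.toGroup (incl_cond k l a b a' b' ha hb) (PresentedGroup.of s)
        = (incl k l a b' a' b' ha le_rfl) (incl k l a b a b' le_rfl hb (PresentedGroup.of s))
    rw [PresentedGroup.toGroup.of, incl_of]
    show _ = (incl k l a b' a' b' ha le_rfl) (PresentedGroup.of ⟨s.val,
      le_trans le_rfl s.2.1, le_trans s.2.2 hb⟩)
    rw [incl_of]
    rfl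
  rw [hcomp]
  have := Function.Injective.comp (inclL_injective hk hl a b' (le_trans hab hb) a' ha ha)
    (inclR_injective hk hl a b hab b' hb hb)
  rwa [← MonoidHom.coe_comp] at this


/-! ### compactness: a word dying in `G̃` dies at a finite stage -/

def clampF (M : ℤ) (hM : 0 ≤ M) : ℤ → {j : ℤ // -M ≤ j ∧ j ≤ M} :=
  fun n => ⟨max (-M) (min M n), by constructor <;> omega⟩

theorem clampF_eq (M : ℤ) (hM : 0 ≤ M) (n : ℤ) (h1 : -M ≤ n) (h2 : n ≤ M) :
    clampF M hM n = ⟨n, h1, h2⟩ :=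
  Subtype.ext (by simp only [clampF]; omega)

theorem clamp_normalClosure (k l : ℤ → ℤ) (w : FreeGroup ℤ)
    (hw : w ∈ Subgroup.normalClosure (dehornoyRels k l)) :
    ∃ N : ℤ, 0 ≤ N ∧ ∀ M : ℤ, N ≤ M → ∀ hM : (0:ℤ) ≤ M,
      FreeGroup.map (clampF M hM) w ∈ Subgroup.normalClosure (auxRels k l (-M) M) := by
  refine Subgroup.closure_induction
    (p := fun x _ => ∃ N : ℤ, 0 ≤ N ∧ ∀ M : ℤ, N ≤ M → ∀ hM : (0:ℤ) ≤ M,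
      FreeGroup.map (clampF M hM) x ∈ Subgroup.normalClosure (auxRels k l (-M) M))
    ?_ ?_ ?_ ?_ hw
  · intro x hx
    rw [Group.mem_conjugatesOfSet_iff] at hx
    obtain ⟨r, hr, hconj⟩ := hx
    rw [isConj_iff] at hconj
    obtain ⟨c, rfl⟩ := hconj
    obtain ⟨n, rfl⟩ := hr
    refine ⟨max n (1 - n), by omega, ?_⟩
    intro M hM hM0
    rw [map_mul, map_mul, map_inv]
    have hmem : FreeGroup.map (clampF M hM0)
        (FreeGroup.of (n - 1) ^ k n * FreeGroup.of n ^ (-(l n)))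
        ∈ Subgroup.normalClosure (auxRels k l (-M) M) := by
      apply Subgroup.subset_normalClosure
      refine ⟨n, ⟨by omega, by omega⟩, ?_⟩
      rw [map_mul, map_zpow, map_zpow, FreeGroup.map.of, FreeGroup.map.of,
        clampF_eq M hM0 (n-1) (by omega) (by omega), clampF_eq M hM0 n (by omega) (by omega)]
    exact Subgroup.Normal.conj_mem (Subgroup.normalClosure_normal) _ hmem _
  · exact ⟨0, le_rfl, fun M _ hM0 => by rw [map_one]; exact one_mem _⟩
  · rintro x y _ _ ⟨N1, hN1, h1⟩ ⟨N2, hN2, h2⟩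
    refine ⟨max N1 N2, by omega, fun M hM hM0 => ?_⟩
    rw [map_mul]
    exact mul_mem (h1 M (by omega) hM0) (h2 M (by omega) hM0)
  · rintro x _ ⟨N1, hN1, h1⟩
    refine ⟨N1, hN1, fun M hM hM0 => ?_⟩
    rw [map_inv]
    exact inv_mem (h1 M hM hM0)

/-! ### the homomorphism to `G̃` -/

theorem gg_rel (k l : ℤ → ℤ) (n : ℤ) :
    gg k l (n - 1) ^ k n * gg k l n ^ (-(l n)) = 1 := by
  have h := mk_rel_one (show (FreeGroup.of (n - 1) ^ k n * FreeGroup.of n ^ (-(l n)))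
    ∈ dehornoyRels k l from ⟨n, rfl⟩)
  rw [map_mul, map_zpow, map_zpow] at h
  exact h

theorem psi_cond (k l : ℤ → ℤ) (a b : ℤ) :
    ∀ r ∈ auxRels k l a b,
      FreeGroup.lift (fun s : {j : ℤ // a ≤ j ∧ j ≤ b} => gg k l s.val) r = 1 := by
  rintro r ⟨j, ⟨h1, h2⟩, rfl⟩
  rw [map_mul, map_zpow, map_zpow, FreeGroup.lift_apply_of, FreeGroup.lift_apply_of]
  exact gg_rel k l j

def psi (k l : ℤ → ℤ) (a b : ℤ) : HAux k l a b →* Gtil k l :=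
  PresentedGroup.toGroup (psi_cond k l a b)

theorem psi_of (k l : ℤ → ℤ) (a b : ℤ) (s : {j : ℤ // a ≤ j ∧ j ≤ b}) :
    psi k l a b (PresentedGroup.of s) = gg k l s.val :=
  PresentedGroup.toGroup.of _

theorem psi_ker (k l : ℤ → ℤ) (hk : ∀ n, 2 ≤ k n) (hl : ∀ n, 2 ≤ l n) (m : ℤ) (hm : 0 ≤ m)
    (x : HAux k l (-m) m) (hx : psi k l (-m) m x = 1) : x = 1 := by
  obtain ⟨w, rfl⟩ := PresentedGroup.mk_surjective (auxRels k l (-m) m) x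
  have hcomm : (psi k l (-m) m).comp (PresentedGroup.mk (auxRels k l (-m) m))
      = (PresentedGroup.mk (dehornoyRels k l)).comp (FreeGroup.map Subtype.val) := by
    refine FreeGroup.ext_hom _ _ (fun s => ?_)
    rw [MonoidHom.comp_apply, MonoidHom.comp_apply]
    show psi k l (-m) m (PresentedGroup.of s)
        = PresentedGroup.mk _ (FreeGroup.map Subtype.val (FreeGroup.of s))
    rw [psi_of, FreeGroup.map.of]
    rfl
  have hmem : FreeGroup.map Subtype.val w ∈ Subgroup.normalClosure (dehornoyRels k l) := by
    have h1 : PresentedGroup.mk (dehornoyRels k l) (FreeGroup.map Subtype.val w) = 1 := by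
      rw [← MonoidHom.comp_apply, ← hcomm, MonoidHom.comp_apply]
      exact hx
    exact (QuotientGroup.eq_one_iff _).1 h1
  obtain ⟨N, hN0, hN⟩ := clamp_normalClosure k l _ hmem
  set M : ℤ := max N m with hMdef
  have hM0 : (0:ℤ) ≤ M := by omega
  have hmM : m ≤ M := by omega
  have h1 : FreeGroup.map (clampF M hM0) (FreeGroup.map Subtype.val w)
      ∈ Subgroup.normalClosure (auxRels k l (-M) M) := hN M (by omega) hM0
  have h2 : (FreeGroup.map (clampF M hM0)).comp (FreeGroup.map Subtype.val)
      = FreeGroup.map (fun s : {j : ℤ // -m ≤ j ∧ j ≤ m} =>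
          (⟨s.val, le_trans (by omega) s.2.1, le_trans s.2.2 hmM⟩ :
            {j : ℤ // -M ≤ j ∧ j ≤ M})) := by
    refine FreeGroup.ext_hom _ _ (fun s => ?_)
    rw [MonoidHom.comp_apply, FreeGroup.map.of, FreeGroup.map.of, FreeGroup.map.of,
      clampF_eq M hM0 s.val (le_trans (by omega) s.2.1) (le_trans s.2.2 hmM)]
  have h3 : (incl k l (-m) m (-M) M (by omega) hmM).comp
        (PresentedGroup.mk (auxRels k l (-m) m))
      = (PresentedGroup.mk (auxRels k l (-M) M)).comp
        (FreeGroup.map (fun s : {j : ℤ // -m ≤ j ∧ j ≤ m} =>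
          (⟨s.val, le_trans (by omega) s.2.1, le_trans s.2.2 hmM⟩ :
            {j : ℤ // -M ≤ j ∧ j ≤ M}))) := by
    refine FreeGroup.ext_hom _ _ (fun s => ?_)
    rw [MonoidHom.comp_apply, MonoidHom.comp_apply, FreeGroup.map.of]
    show incl k l (-m) m (-M) M (by omega) hmM (PresentedGroup.of s) = _
    rw [incl_of]
    rfl
  have h4 : incl k l (-m) m (-M) M (by omega) hmM (PresentedGroup.mk _ w) = 1 := by
    rw [← MonoidHom.comp_apply, h3, MonoidHom.comp_apply]
    rw [← MonoidHom.comp_apply, h2] at h1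
    exact (QuotientGroup.eq_one_iff _).2 h1
  have hinj := incl_injective hk hl (-m) m (-M) M (by omega) (by omega) hmM
  have := hinj (a₁ := PresentedGroup.mk _ w) (a₂ := 1) (by rw [h4, map_one])
  exact this

theorem psi_injective (k l : ℤ → ℤ) (hk : ∀ n, 2 ≤ k n) (hl : ∀ n, 2 ≤ l n) (m : ℤ)
    (hm : 0 ≤ m) : Function.Injective (psi k l (-m) m) := by
  intro x y hxy
  have h1 : psi k l (-m) m (x * y⁻¹) = 1 := by
    rw [map_mul, map_inv, hxy, mul_inv_cancel]
  have := psi_ker k l hk hl m hm _ h1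
  exact mul_inv_eq_one.1 this


theorem psi_range (k l : ℤ → ℤ) (m : ℤ) :
    (psi k l (-m) m).range
      = Subgroup.closure {x | ∃ j : ℤ, -m ≤ j ∧ j ≤ m ∧ x = gg k l j} := by
  rw [MonoidHom.range_eq_map, ← PresentedGroup.closure_range_of (auxRels k l (-m) m),
    MonoidHom.map_closure]
  congr 1
  ext x
  constructor
  · rintro ⟨y, ⟨s, rfl⟩, rfl⟩
    exact ⟨s.val, s.2.1, s.2.2, (psi_of k l (-m) m s).symm⟩
  · rintro ⟨j, hj1, hj2, rfl⟩
    exact ⟨PresentedGroup.of ⟨j, hj1, hj2⟩, ⟨⟨j, hj1, hj2⟩, rfl⟩, psi_of k l (-m) m _⟩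

end Stmt15Aux

theorem stmt15 (k l : ℤ → ℤ) (hk : ∀ n : ℤ, 2 ≤ k n) (hl : ∀ n : ℤ, 2 ≤ l n)
    (m : ℤ) (hm : 0 ≤ m) :
    ∃ ψ : Hfin k l m →* Gtil k l,
      (∀ j : {j : ℤ // -m ≤ j ∧ j ≤ m}, ψ (PresentedGroup.of j) = gg k l j.val) ∧
      (∀ ψ' : Hfin k l m →* Gtil k l,
        (∀ j : {j : ℤ // -m ≤ j ∧ j ≤ m}, ψ' (PresentedGroup.of j) = gg k l j.val) →
        ψ' = ψ) ∧
      Function.Injective ψ ∧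
      ψ.range = Gsub k l m := by
  refine ⟨Stmt15Aux.psi k l (-m) m, ?_, ?_, ?_, ?_⟩
  · exact fun j => Stmt15Aux.psi_of k l (-m) m j
  · intro ψ' h
    exact PresentedGroup.ext fun s => (h s).trans (Stmt15Aux.psi_of k l (-m) m s).symm
  · exact Stmt15Aux.psi_injective k l hk hl m hm
  · exact Stmt15Aux.psi_range k l m
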